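/- Let V be a complex Hilbert space and Ω ⊆ ℝ^m open. Suppose P : Ω → End V takes self-adjoint values, is bounded below (there is c ∈ ℝ with ⟨P(x)v,v⟩ ≥ c‖v‖² for all x ∈ Ω, v ∈ V), and is weakly upper semicontinuous (for every v ∈ V the function x ↦ ⟨P(x)v,v⟩ is upper semicontinuous). Then for every continuous φ : Ω → V the function x ↦ ⟨P(x)φ(x),φ(x)⟩ is upper semicontinuous on Ω. -/

import Mathlib

open Complex Metric Filter Set

noncomputable section

variable {V : Type*} [NormedAddCommGroup V] [InnerProductSpace ℂ V] [CompleteSpace V]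

local notation "⟪" x ", " y "⟫" => @inner ℂ _ _ x y

/-- An upper semicontinuous real function is bounded above on a compact set. -/
lemma usc_bddAbove_aux {X : Type*} [TopologicalSpace X] {f : X → ℝ} {K : Set X}
    (hK : IsCompact K) (hf : ∀ x ∈ K, UpperSemicontinuousAt f x) :
    ∃ M, ∀ x ∈ K, f x ≤ M := by
  have hU : ∀ x ∈ K, {y | f y < f x + 1} ∈ nhds x := fun x hx =>
    hf x hx (f x + 1) (by linarith)
  obtain ⟨t, htK, hcov⟩ := hK.elim_nhds_subcover (fun x => {y | f y < f x + 1}) hU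
  by_cases ht : t.Nonempty
  · refine ⟨t.sup' ht (fun x => f x + 1), fun y hy => ?_⟩
    obtain ⟨x, hxt, hxy⟩ := Set.mem_iUnion₂.1 (hcov hy)
    exact le_trans (le_of_lt hxy) (Finset.le_sup' (fun x => f x + 1) hxt)
  · refine ⟨0, fun y hy => absurd (Set.mem_iUnion₂.1 (hcov hy)) ?_⟩
    rintro ⟨x, hxt, -⟩
    exact ht ⟨x, hxt⟩

/-- Proposition 2.4: if `P` is self-adjoint valued, bounded below,
and weakly upper semicontinuous, then `x ↦ ⟨P(x)φ(x), φ(x)⟩` is upper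
semicontinuous for every continuous `φ`. -/
theorem weakly_usc_apply_continuous
    {m : ℕ} (Ω : Set (EuclideanSpace ℝ (Fin m))) (hΩ : IsOpen Ω)
    (P : EuclideanSpace ℝ (Fin m) → (V →L[ℂ] V))
    (hsa : ∀ x ∈ Ω, IsSelfAdjoint (P x))
    (hbdd : ∃ c : ℝ, ∀ x ∈ Ω, ∀ v : V, c * ‖v‖ ^ 2 ≤ (P x).reApplyInnerSelf v)
    (husc : ∀ v : V, UpperSemicontinuousOn (fun x => (P x).reApplyInnerSelf v) Ω)
    (φ : EuclideanSpace ℝ (Fin m) → V) (hφ : ContinuousOn φ Ω) :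
    UpperSemicontinuousOn (fun x => (P x).reApplyInnerSelf (φ x)) Ω := by
  obtain ⟨c, hc⟩ := hbdd
  set R : EuclideanSpace ℝ (Fin m) → V →L[ℂ] V := fun x => P x - (c : ℂ) • 1 with hRdef
  -- basic relation between the forms of `R` and `P`
  have hrq : ∀ x, ∀ v : V,
      (R x).reApplyInnerSelf v = (P x).reApplyInnerSelf v - c * ‖v‖ ^ 2 := by
    intro x v
    simp only [hRdef, ContinuousLinearMap.reApplyInnerSelf_apply,
      ContinuousLinearMap.sub_apply, ContinuousLinearMap.smul_apply,
      ContinuousLinearMap.one_apply, inner_sub_left, inner_smul_left,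
      Complex.conj_ofReal, map_sub]
    have : RCLike.re (((c : ℂ)) * ⟪v, v⟫) = c * RCLike.re ⟪v, v⟫ :=
      Complex.re_ofReal_mul c _
    rw [this, inner_self_eq_norm_sq]
  have hr0 : ∀ x ∈ Ω, ∀ v : V, 0 ≤ (R x).reApplyInnerSelf v := by
    intro x hx v
    rw [hrq]
    linarith [hc x hx v]
  have hRsa : ∀ x ∈ Ω, IsSelfAdjoint (R x) := fun x hx =>
    (hsa x hx).sub (IsSelfAdjoint.smul
      (by simp [isSelfAdjoint_iff, Complex.star_def]) (IsSelfAdjoint.one _))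
  have hre_sym : ∀ x ∈ Ω, ∀ v w : V,
      RCLike.re ⟪R x w, v⟫ = RCLike.re ⟪R x v, w⟫ := by
    intro x hx v w
    have h1 : ⟪R x w, v⟫ = starRingEnd ℂ ⟪R x v, w⟫ := by
      calc ⟪R x w, v⟫ = ⟪w, R x v⟫ := by
            conv_lhs => rw [← (hRsa x hx).adjoint_eq]
            exact ContinuousLinearMap.adjoint_inner_left (R x) v w
        _ = starRingEnd ℂ ⟪R x v, w⟫ := (inner_conj_symm _ _).symm
    rw [h1]
    exact RCLike.conj_re _
  -- expansion of the quadratic form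
  have hexp : ∀ x ∈ Ω, ∀ v w : V,
      (R x).reApplyInnerSelf (v + w) = (R x).reApplyInnerSelf v
        + 2 * RCLike.re ⟪R x v, w⟫ + (R x).reApplyInnerSelf w := by
    intro x hx v w
    simp only [ContinuousLinearMap.reApplyInnerSelf_apply, map_add,
      inner_add_left, inner_add_right]
    have := hre_sym x hx v w
    ring_nf
    linarith
  -- upper semicontinuity of the form of `R`, as `UpperSemicontinuousAt` (Ω open)
  have hruscAt : ∀ v : V, ∀ x ∈ Ω,
      UpperSemicontinuousAt (fun z => (R z).reApplyInnerSelf v) x := by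
    intro v x hx y hy
    have hy' : (R x).reApplyInnerSelf v < y := hy
    rw [hrq] at hy'
    have h1 := husc v x hx (y + c * ‖v‖ ^ 2)
      (show (P x).reApplyInnerSelf v < y + c * ‖v‖ ^ 2 by linarith)
    rw [nhdsWithin_eq_nhds.2 (hΩ.mem_nhds hx)] at h1
    filter_upwards [h1] with z hz
    have hz' : (P z).reApplyInnerSelf v < y + c * ‖v‖ ^ 2 := hz
    show (R z).reApplyInnerSelf v < y
    rw [hrq]
    linarith
  -- main argument
  intro x₀ hx₀ y hy
  obtain ⟨ρ, hρpos, hball⟩ : ∃ ρ > 0, closedBall x₀ ρ ⊆ Ω := by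
    obtain ⟨ρ, hρ, h⟩ := Metric.isOpen_iff.1 hΩ x₀ hx₀
    exact ⟨ρ / 2, by linarith, fun z hz =>
      h (lt_of_le_of_lt (mem_closedBall.1 hz) (by linarith))⟩
  set K : Set (EuclideanSpace ℝ (Fin m)) := closedBall x₀ ρ with hKdef
  have hKc : IsCompact K := isCompact_closedBall _ _
  have hx₀K : x₀ ∈ K := mem_closedBall_self hρpos.le
  -- per-vector bound of the form on K
  have hM : ∀ v : V, ∃ M, ∀ x ∈ K, (R x).reApplyInnerSelf v ≤ M := fun v =>
    usc_bddAbove_aux hKc (fun x hx => hruscAt v x (hball hx))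
  -- per-pair bound on the real part of the sesquilinear form
  have key : ∀ u w : V, ∃ C, ∀ x ∈ K, |RCLike.re ⟪R x u, w⟫| ≤ C := by
    intro u w
    obtain ⟨M1, h1⟩ := hM (u + w)
    obtain ⟨M2, h2⟩ := hM u
    obtain ⟨M3, h3⟩ := hM w
    refine ⟨(M1 + M2 + M3) / 2, fun x hx => ?_⟩
    have hxΩ := hball hx
    have e := hexp x hxΩ u w
    have n1 := hr0 x hxΩ (u + w)
    have n2 := hr0 x hxΩ u
    have n3 := hr0 x hxΩ w
    have b1 := h1 x hx
    have b2 := h2 x hx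
    have b3 := h3 x hx
    rw [abs_le]
    constructor <;> linarith
  -- per-pair bound on the norm of the sesquilinear form
  have habs : ∀ v w : V, ∃ C, ∀ x ∈ K, ‖⟪R x v, w⟫‖ ≤ C := by
    intro v w
    obtain ⟨C1, hC1⟩ := key v w
    obtain ⟨C2, hC2⟩ := key v ((Complex.I) • w)
    refine ⟨C1 + C2, fun x hx => ?_⟩
    have him : (⟪R x v, w⟫).im = -RCLike.re ⟪R x v, (Complex.I) • w⟫ := by
      rw [inner_smul_right]
      simp [RCLike.re_to_complex, Complex.mul_re]
    have h1 : |(⟪R x v, w⟫).re| ≤ C1 := by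
      have := hC1 x hx
      rwa [RCLike.re_to_complex] at this
    have h2 : |(⟪R x v, w⟫).im| ≤ C2 := by
      rw [him, abs_neg]
      exact hC2 x hx
    calc ‖⟪R x v, w⟫‖ = ‖⟪R x v, w⟫‖ := rfl
      _ ≤ |(⟪R x v, w⟫).re| + |(⟪R x v, w⟫).im| :=
          Complex.norm_le_abs_re_add_abs_im _
      _ ≤ C1 + C2 := add_le_add h1 h2
  -- first Banach–Steinhaus: per-vector bound on ‖R x v‖
  have hRv : ∀ v : V, ∃ C, ∀ x ∈ K, ‖R x v‖ ≤ C := by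
    intro v
    have hpt : ∀ w : V, ∃ C, ∀ i : K, ‖innerSL ℂ (R i.1 v) w‖ ≤ C := by
      intro w
      obtain ⟨C, hC⟩ := habs v w
      exact ⟨C, fun i => hC i.1 i.2⟩
    obtain ⟨C', hC'⟩ := banach_steinhaus hpt
    refine ⟨C', fun x hx => ?_⟩
    have := hC' ⟨x, hx⟩
    rwa [innerSL_apply_norm] at this
  -- second Banach–Steinhaus: uniform bound on ‖R x‖ on K
  obtain ⟨C0, hC0⟩ := banach_steinhaus (g := fun i : K => R i.1)
    (fun v => (hRv v).imp fun C h i => h i.1 i.2)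
  set C : ℝ := max C0 0 with hCdef
  have hCpos : 0 ≤ C := le_max_right _ _
  have hC : ∀ x ∈ K, ‖R x‖ ≤ C := fun x hx =>
    le_trans (hC0 ⟨x, hx⟩) (le_max_left _ _)
  -- epsilon chase
  set φ₀ : V := φ x₀ with hφ₀def
  set ε : ℝ := y - (P x₀).reApplyInnerSelf φ₀ with hεdef
  have hε : 0 < ε := by simpa [hεdef] using sub_pos.2 hy
  set D : ℝ := 2 * C * ‖φ₀‖ + C + 1 with hDdef
  have hD : 0 < D := by positivity
  set δ : ℝ := min 1 (ε / 4 / D) with hδdef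
  have hδpos : 0 < δ := lt_min one_pos (by positivity)
  -- the four eventual conditions
  have E1 : ∀ᶠ x in nhdsWithin x₀ Ω, x ∈ K :=
    mem_nhdsWithin_of_mem_nhds (closedBall_mem_nhds x₀ hρpos)
  have E2 : ∀ᶠ x in nhdsWithin x₀ Ω,
      (P x).reApplyInnerSelf φ₀ < (P x₀).reApplyInnerSelf φ₀ + ε / 4 :=
    husc φ₀ x₀ hx₀ _ (by linarith)
  have htφ : Filter.Tendsto φ (nhdsWithin x₀ Ω) (nhds φ₀) := hφ x₀ hx₀
  have E3 : ∀ᶠ x in nhdsWithin x₀ Ω,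
      |c * ‖φ x‖ ^ 2 - c * ‖φ₀‖ ^ 2| < ε / 4 := by
    have ht : Filter.Tendsto (fun x => c * ‖φ x‖ ^ 2) (nhdsWithin x₀ Ω)
        (nhds (c * ‖φ₀‖ ^ 2)) := (htφ.norm.pow 2).const_mul c
    have := Metric.tendsto_nhds.mp ht (ε / 4) (by positivity)
    filter_upwards [this] with x hx
    rwa [Real.dist_eq] at hx
  have E4 : ∀ᶠ x in nhdsWithin x₀ Ω, ‖φ x - φ₀‖ < δ := by
    have := Metric.tendsto_nhds.mp htφ δ hδpos
    filter_upwards [this] with x hx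
    rwa [dist_eq_norm] at hx
  filter_upwards [E1, E2, E3, E4, eventually_mem_nhdsWithin] with x hxK hE2 hE3 hE4 hxΩ
  set h : V := φ x - φ₀ with hhdef
  have hφx : φ x = φ₀ + h := by simp [hhdef]
  -- bound the quadratic form of R at φ x
  have hexp' := hexp x hxΩ φ₀ h
  have bound1 : RCLike.re ⟪R x φ₀, h⟫ ≤ C * ‖φ₀‖ * ‖h‖ := by
    calc RCLike.re ⟪R x φ₀, h⟫ ≤ ‖⟪R x φ₀, h⟫‖ := RCLike.re_le_norm _
      _ ≤ ‖R x φ₀‖ * ‖h‖ := norm_inner_le_norm _ _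
      _ ≤ (C * ‖φ₀‖) * ‖h‖ := by
          apply mul_le_mul_of_nonneg_right _ (norm_nonneg _)
          calc ‖R x φ₀‖ ≤ ‖R x‖ * ‖φ₀‖ := (R x).le_opNorm _
            _ ≤ C * ‖φ₀‖ :=
              mul_le_mul_of_nonneg_right (hC x hxK) (norm_nonneg _)
      _ = C * ‖φ₀‖ * ‖h‖ := by ring
  have bound2 : (R x).reApplyInnerSelf h ≤ C * ‖h‖ ^ 2 := by
    calc (R x).reApplyInnerSelf h = RCLike.re ⟪R x h, h⟫ :=
          (R x).reApplyInnerSelf_apply h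
      _ ≤ ‖⟪R x h, h⟫‖ := RCLike.re_le_norm _
      _ ≤ ‖R x h‖ * ‖h‖ := norm_inner_le_norm _ _
      _ ≤ (‖R x‖ * ‖h‖) * ‖h‖ :=
          mul_le_mul_of_nonneg_right ((R x).le_opNorm _) (norm_nonneg _)
      _ ≤ (C * ‖h‖) * ‖h‖ := by
          apply mul_le_mul_of_nonneg_right _ (norm_nonneg _)
          exact mul_le_mul_of_nonneg_right (hC x hxK) (norm_nonneg _)
      _ = C * ‖h‖ ^ 2 := by ring
  have hh1 : ‖h‖ ≤ 1 := le_trans hE4.le (min_le_left _ _)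
  have hhn : 0 ≤ ‖h‖ := norm_nonneg _
  have hsmall : 2 * (C * ‖φ₀‖ * ‖h‖) + C * ‖h‖ ^ 2 ≤ ε / 4 := by
    have step1 : 2 * (C * ‖φ₀‖ * ‖h‖) + C * ‖h‖ ^ 2 ≤ D * ‖h‖ := by
      have : C * ‖h‖ ^ 2 ≤ C * ‖h‖ := by
        have h2 := mul_le_mul_of_nonneg_left hh1 (mul_nonneg hCpos hhn)
        calc C * ‖h‖ ^ 2 = C * ‖h‖ * ‖h‖ := by ring
          _ ≤ C * ‖h‖ * 1 := h2
          _ = C * ‖h‖ := by ring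
      have hD' : D * ‖h‖ = 2 * C * ‖φ₀‖ * ‖h‖ + C * ‖h‖ + ‖h‖ := by
        rw [hDdef]; ring
      nlinarith
    have step2 : D * ‖h‖ ≤ D * δ :=
      mul_le_mul_of_nonneg_left hE4.le hD.le
    have step3 : D * δ ≤ ε / 4 := by
      have hδ2 : δ ≤ ε / 4 / D := min_le_right _ _
      calc D * δ ≤ D * (ε / 4 / D) := mul_le_mul_of_nonneg_left hδ2 hD.le
        _ = ε / 4 := by rw [mul_comm, div_mul_cancel₀ _ hD.ne']
    calc 2 * (C * ‖φ₀‖ * ‖h‖) + C * ‖h‖ ^ 2 ≤ D * ‖h‖ := step1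
      _ ≤ D * δ := step2
      _ ≤ ε / 4 := step3
  -- final combination
  have hr_final : (R x).reApplyInnerSelf (φ x) ≤ (R x).reApplyInnerSelf φ₀ + ε / 4 := by
    rw [hφx, hexp']
    linarith
  have habs3 : c * ‖φ x‖ ^ 2 < c * ‖φ₀‖ ^ 2 + ε / 4 := by
    have := abs_lt.1 hE3
    linarith [this.2]
  have hq1 : (P x).reApplyInnerSelf (φ x)
      = (R x).reApplyInnerSelf (φ x) + c * ‖φ x‖ ^ 2 := by
    rw [hrq]; ring
  have hq2 : (R x).reApplyInnerSelf φ₀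
      = (P x).reApplyInnerSelf φ₀ - c * ‖φ₀‖ ^ 2 := hrq x φ₀
  have hεy : y = (P x₀).reApplyInnerSelf φ₀ + ε := by rw [hεdef]; ring
  rw [hεy]
  calc (P x).reApplyInnerSelf (φ x)
      = (R x).reApplyInnerSelf (φ x) + c * ‖φ x‖ ^ 2 := hq1
    _ ≤ ((R x).reApplyInnerSelf φ₀ + ε / 4) + c * ‖φ x‖ ^ 2 := by linarith
    _ < ((P x).reApplyInnerSelf φ₀ - c * ‖φ₀‖ ^ 2 + ε / 4)
        + (c * ‖φ₀‖ ^ 2 + ε / 4) := by rw [hq2]; linarith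
    _ < (P x₀).reApplyInnerSelf φ₀ + ε := by linarith
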